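/- Let ζ ≠ 1 be a constant and let h : J → ℝ be a twice differentiable nonvanishing function with nonvanishing first derivative on an open interval J ⊆ ℝ₊ satisfying (h''·h)/(h')² + h/(x·h') = ζ for all x ∈ J (the case σ = 1 of equation (5.5)). Then there exist a nonzero constant η and a constant κ such that h(x) = ( (1−ζ)κ + (1−ζ)η·ln x )^{1/(1−ζ)} for all x ∈ J where the base is positive. -/

import Mathlib

open Real

private lemma const_aux17 {J : Set ℝ} (hJopen : IsOpen J) (hconv : Convex ℝ J)
    {f : ℝ → ℝ} (hf : ∀ x ∈ J, HasDerivAt f 0 x) {x y : ℝ} (hx : x ∈ J) (hy : y ∈ J) :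
    f x = f y := by
  refine hconv.is_const_of_fderivWithin_eq_zero
    (fun z hz => ((hf z hz).differentiableAt).differentiableWithinAt) (fun z hz => ?_) hx hy
  rw [fderivWithin_of_isOpen hJopen hz, ((hf z hz).hasFDerivAt).fderiv]
  ext
  simp

/-- Equation (5.5) with `σ = 1`, `ζ ≠ 1`: a twice differentiable nonvanishing
function `h` with nonvanishing first derivative on an open interval
`J ⊆ ℝ₊` satisfying `(h'' h)/(h')² + h/(x h') = ζ` on `J` is of the form
`h(x) = ((1−ζ)κ + (1−ζ)η ln x)^{1/(1−ζ)}` wherever the base is positive. -/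
theorem stmt_17 (ζ : ℝ) (hζ : ζ ≠ 1) (J : Set ℝ)
    (hJopen : IsOpen J) (hJconn : J.OrdConnected) (hJpos : J ⊆ Set.Ioi (0 : ℝ))
    (h : ℝ → ℝ)
    (hd1 : ∀ x ∈ J, DifferentiableAt ℝ h x)
    (hd2 : ∀ x ∈ J, DifferentiableAt ℝ (deriv h) x)
    (hne : ∀ x ∈ J, h x ≠ 0)
    (hde : ∀ x ∈ J, deriv h x ≠ 0)
    (heq : ∀ x ∈ J,
      deriv (deriv h) x * h x / (deriv h x) ^ 2 + h x / (x * deriv h x) = ζ) :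
    ∃ η : ℝ, η ≠ 0 ∧ ∃ κ : ℝ, ∀ x ∈ J,
      0 < (1 - ζ) * κ + (1 - ζ) * η * Real.log x →
        h x = ((1 - ζ) * κ + (1 - ζ) * η * Real.log x) ^ ((1 : ℝ) / (1 - ζ)) := by
  rcases Set.eq_empty_or_nonempty J with rfl | ⟨x₀, hx₀⟩
  · exact ⟨1, one_ne_zero, 0, by simp⟩
  have hconv : Convex ℝ J := convex_iff_ordConnected.mpr hJconn
  have h1ζ : (1:ℝ) - ζ ≠ 0 := sub_ne_zero.mpr (Ne.symm hζ)
  have hxpos : ∀ x ∈ J, 0 < x := fun x hx => hJpos hx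
  set B : ℝ → ℝ := fun x => h x / (x * deriv h x) with hBdef
  have hBne : ∀ x ∈ J, B x ≠ 0 := fun x hx =>
    div_ne_zero (hne x hx) (mul_ne_zero (hxpos x hx).ne' (hde x hx))
  -- the key rearranged ODE
  have hkey : ∀ x ∈ J, deriv (deriv h) x * h x * x = ζ * (deriv h x)^2 * x - deriv h x * h x := by
    intro x hx
    have H := heq x hx
    have hx0 : x ≠ 0 := (hxpos x hx).ne'
    have hd : deriv h x ≠ 0 := hde x hx
    field_simp at H
    have H2 : deriv (deriv h) x * h x * x * deriv h x
        = (ζ * (deriv h x)^2 * x - deriv h x * h x) * deriv h x := by linear_combination deriv h x * H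
    exact mul_right_cancel₀ hd H2
  -- derivative of B
  have hBderiv : ∀ x ∈ J, HasDerivAt B ((1-ζ)/x) x := by
    intro x hx
    have hx0 : x ≠ 0 := (hxpos x hx).ne'
    have hd : deriv h x ≠ 0 := hde x hx
    have hh : h x ≠ 0 := hne x hx
    have H1 : HasDerivAt h (deriv h x) x := (hd1 x hx).hasDerivAt
    have H2 : HasDerivAt (deriv h) (deriv (deriv h) x) x := (hd2 x hx).hasDerivAt
    have Hden : HasDerivAt (fun y => y * deriv h y)
        (1 * deriv h x + x * deriv (deriv h) x) x := (hasDerivAt_id x).mul H2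
    have HB : HasDerivAt B
        ((deriv h x * (x * deriv h x) - h x * (1 * deriv h x + x * deriv (deriv h) x))
          / (x * deriv h x)^2) x := H1.div Hden (mul_ne_zero hx0 hd)
    convert HB using 1
    have hk := hkey x hx
    field_simp
    linear_combination hk
  -- B is affine in log
  set C : ℝ := B x₀ - (1-ζ) * Real.log x₀ with hCdef
  have hBeq : ∀ x ∈ J, B x = C + (1-ζ) * Real.log x := by
    intro x hx
    have hcon : (fun y => B y - (1-ζ) * Real.log y) x
        = (fun y => B y - (1-ζ) * Real.log y) x₀ := by
      refine const_aux17 (f := fun y => B y - (1-ζ) * Real.log y) hJopen hconv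
        (fun y hy => ?_) hx hx₀
      have hy0 : y ≠ 0 := (hxpos y hy).ne'
      have := (hBderiv y hy).sub ((Real.hasDerivAt_log hy0).const_mul (1-ζ))
      refine this.congr_deriv ?_
      field_simp
      ring
    simp only at hcon
    rw [hCdef]
    linarith [hcon]
  -- (1-ζ) log h - log B is constant
  set c : ℝ := (1-ζ) * Real.log (h x₀) - Real.log (B x₀) with hcdef
  have hF2 : ∀ x ∈ J, (1-ζ) * Real.log (h x) - Real.log (B x) = c := by
    intro x hx
    have hcon : (fun y => (1-ζ) * Real.log (h y) - Real.log (B y)) x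
        = (fun y => (1-ζ) * Real.log (h y) - Real.log (B y)) x₀ := by
      refine const_aux17 (f := fun y => (1-ζ) * Real.log (h y) - Real.log (B y)) hJopen hconv
        (fun y hy => ?_) hx hx₀
      have hy0 : y ≠ 0 := (hxpos y hy).ne'
      have hd : deriv h y ≠ 0 := hde y hy
      have hh : h y ≠ 0 := hne y hy
      have H1 : HasDerivAt h (deriv h y) y := (hd1 y hy).hasDerivAt
      have := ((H1.log hh).const_mul (1-ζ)).sub ((hBderiv y hy).log (hBne y hy))
      refine this.congr_deriv ?_
      rw [hBdef]
      field_simp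
      ring
    simp only at hcon
    rw [hcdef]
    linarith [hcon]
  -- |B| in terms of |h|
  have habs : ∀ x ∈ J, |B x| = Real.exp (-c) * |h x| ^ ((1:ℝ)-ζ) := by
    intro x hx
    have hh : h x ≠ 0 := hne x hx
    have hlog : Real.log (B x) = (1-ζ) * Real.log (h x) - c := by
      have := hF2 x hx; linarith
    calc |B x| = Real.exp (Real.log (B x)) := (Real.exp_log_eq_abs (hBne x hx)).symm
      _ = Real.exp ((1-ζ) * Real.log (h x) - c) := by rw [hlog]
      _ = Real.exp (-c) * |h x| ^ ((1:ℝ)-ζ) := by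
          rw [Real.rpow_def_of_pos (abs_pos.mpr hh), Real.log_abs,
            mul_comm (Real.log (h x)) (1-ζ), sub_eq_add_neg, Real.exp_add]
          ring
  -- constancy of sign
  have hsign : ∀ f : ℝ → ℝ, (∀ x ∈ J, ContinuousAt f x) → (∀ x ∈ J, f x ≠ 0) →
      ∀ x ∈ J, 0 < f x * f x₀ := by
    intro f hfc hfne x hx
    rcases lt_trichotomy (f x * f x₀) 0 with hlt | he | hgt
    · exfalso
      have hsub : Set.uIcc x x₀ ⊆ J := hJconn.uIcc_subset hx hx₀
      have hc : ContinuousOn f (Set.uIcc x x₀) := fun y hy =>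
        (hfc y (hsub hy)).continuousWithinAt
      have h0 : (0:ℝ) ∈ Set.uIcc (f x) (f x₀) := by
        rcases mul_neg_iff.mp hlt with ⟨ha, hb⟩ | ⟨ha, hb⟩
        · exact Set.mem_uIcc.mpr (Or.inr ⟨hb.le, ha.le⟩)
        · exact Set.mem_uIcc.mpr (Or.inl ⟨ha.le, hb.le⟩)
      obtain ⟨y, hy, hy0⟩ := intermediate_value_uIcc hc h0
      exact hfne y (hsub hy) hy0
    · exact absurd he (mul_ne_zero (hfne x hx) (hfne x₀ hx₀))
    · exact hgt
  have hsignh : ∀ x ∈ J, 0 < h x * h x₀ :=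
    hsign h (fun x hx => (hd1 x hx).continuousAt) hne
  have hsignB : ∀ x ∈ J, 0 < B x * B x₀ :=
    hsign B (fun x hx => (hBderiv x hx).differentiableAt.continuousAt) hBne
  have hsgn : ∀ a b : ℝ, 0 < a * b → (|b| / b) * a = |a| := by
    intro a b hab
    rcases mul_pos_iff.mp hab with ⟨ha, hb⟩ | ⟨ha, hb⟩
    · rw [abs_of_pos hb, abs_of_pos ha, div_self hb.ne', one_mul]
    · rw [abs_of_neg hb, abs_of_neg ha, neg_div, div_self hb.ne, neg_one_mul]
  -- choose the constants
  refine ⟨(|h x₀| / h x₀) * (|B x₀| / B x₀) * Real.exp c, ?_,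
    (|h x₀| / h x₀) * (|B x₀| / B x₀) * Real.exp c * C / (1-ζ), ?_⟩
  · exact mul_ne_zero (mul_ne_zero
      (div_ne_zero (abs_ne_zero.mpr (hne x₀ hx₀)) (hne x₀ hx₀))
      (div_ne_zero (abs_ne_zero.mpr (hBne x₀ hx₀)) (hBne x₀ hx₀))) (Real.exp_ne_zero c)
  intro x hx hpos
  set η : ℝ := (|h x₀| / h x₀) * (|B x₀| / B x₀) * Real.exp c with hηdef
  have hh : h x ≠ 0 := hne x hx
  have hbase : (1-ζ) * (η * C / (1-ζ)) + (1-ζ) * η * Real.log x = η * B x := by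
    rw [hBeq x hx]
    field_simp
  have hee : Real.exp c * Real.exp (-c) = 1 := by
    rw [← Real.exp_add, add_neg_cancel, Real.exp_zero]
  have e2 : (|B x₀| / B x₀) * B x = |B x| := hsgn _ _ (hsignB x hx)
  have e1 : η * B x = (|h x₀| / h x₀) * |h x| ^ ((1:ℝ)-ζ) := by
    calc η * B x = (|h x₀| / h x₀) * Real.exp c * ((|B x₀| / B x₀) * B x) := by
          rw [hηdef]; ring
      _ = (|h x₀| / h x₀) * Real.exp c * (Real.exp (-c) * |h x| ^ ((1:ℝ)-ζ)) := by
          rw [e2, habs x hx]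
      _ = (|h x₀| / h x₀) * |h x| ^ ((1:ℝ)-ζ) * (Real.exp c * Real.exp (-c)) := by ring
      _ = (|h x₀| / h x₀) * |h x| ^ ((1:ℝ)-ζ) := by rw [hee, mul_one]
  rw [hbase, e1] at hpos ⊢
  have hrp : (0:ℝ) < |h x| ^ ((1:ℝ)-ζ) := Real.rpow_pos_of_pos (abs_pos.mpr hh) _
  have hs0 : 0 < |h x₀| / h x₀ := by
    rcases mul_pos_iff.mp hpos with ⟨ha, _⟩ | ⟨_, hb⟩
    · exact ha
    · linarith
  have hx₀pos : 0 < h x₀ := by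
    rcases lt_trichotomy (h x₀) 0 with hlt | he | hgt
    · exfalso
      rw [abs_of_neg hlt, neg_div, div_self (hne x₀ hx₀)] at hs0
      linarith
    · exact absurd he (hne x₀ hx₀)
    · exact hgt
  have hs1 : |h x₀| / h x₀ = 1 := by rw [abs_of_pos hx₀pos, div_self (hne x₀ hx₀)]
  have hhx : 0 < h x := by nlinarith [hsignh x hx]
  rw [hs1, one_mul, abs_of_pos hhx, ← Real.rpow_mul hhx.le, mul_one_div, div_self h1ζ,
    Real.rpow_one]
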